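/- Let V be a 2-dimensional subspace of a finite-dimensional inner product space E and let u, s ∈ V be unit vectors with angle ∠(u,s) < ξ_0 for some ξ_0 ∈ (0, π/2). Then there exists a rotation R of V (extended by the identity on V^⊥) with rotation angle of absolute value at most ξ_0 such that R(u) is collinear with s; consequently ‖R − Id‖ ≤ 2 sin(ξ_0/2). -/

import Mathlib

open RealInnerProductSpace

private lemma stmt_17_aux_a01 {a : ℝ} (h0 : 0 ≤ a) (h2 : (0:ℝ) = 1 - a ^ 2) : a = 1 := by
  nlinarith

private lemma stmt_17_aux_bessel {E : Type*} [NormedAddCommGroup E] [InnerProductSpace ℝ E]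
    (u e2 x : E) (huu : ⟪u, u⟫ = 1) (hue : ⟪u, e2⟫ = 0) (hee : ⟪e2, e2⟫ = 1) :
    ⟪u, x⟫ ^ 2 + ⟪e2, x⟫ ^ 2 ≤ ‖x‖ ^ 2 := by
  have heu : ⟪e2, u⟫ = 0 := by rw [real_inner_comm]; exact hue
  have hxu : ⟪x, u⟫ = ⟪u, x⟫ := real_inner_comm u x
  have hxe : ⟪x, e2⟫ = ⟪e2, x⟫ := real_inner_comm e2 x
  have h0 : (0 : ℝ) ≤ ⟪x - ⟪u, x⟫ • u - ⟪e2, x⟫ • e2,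
      x - ⟪u, x⟫ • u - ⟪e2, x⟫ • e2⟫ := real_inner_self_nonneg
  simp only [inner_sub_left, inner_sub_right, real_inner_smul_left,
    real_inner_smul_right, huu, hue, heu, hee, hxu, hxe] at h0
  rw [← real_inner_self_eq_norm_sq]
  nlinarith [h0]

private lemma stmt_17_aux_ineq {a0 A X c si co N : ℝ} (h1 : N = (2 - 2 * a0) * A)
    (h2 : A ≤ X ^ 2) (h3 : c < a0) (h4 : a0 ≤ 1) (h5 : c = 2 * co ^ 2 - 1)
    (h6 : si ^ 2 + co ^ 2 = 1) (hA : 0 ≤ A) : N ≤ (2 * si * X) ^ 2 := by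
  nlinarith [sq_nonneg si, sq_nonneg X]

set_option maxHeartbeats 1600000 in
/-- If `u, s` are unit vectors of a 2-plane `V` in a finite-dimensional inner product space
making an angle `arccos |⟪u,s⟫| < ξ₀ < π/2`, then there is a rotation `R` of `V` (extended
by the identity on `V^⊥`) of angle of absolute value at most `ξ₀` sending `u` to a vector
collinear with `s`; consequently `‖R − Id‖ ≤ 2 sin(ξ₀/2)`. -/
theorem stmt_17 {E : Type*} [NormedAddCommGroup E] [InnerProductSpace ℝ E]
    [FiniteDimensional ℝ E]
    (V : Submodule ℝ E) (hV : Module.finrank ℝ V = 2)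
    (u s : E) (hu : u ∈ V) (hs : s ∈ V) (hu1 : ‖u‖ = 1) (hs1 : ‖s‖ = 1)
    (ξ₀ : ℝ) (hξ₀ : ξ₀ ∈ Set.Ioo 0 (Real.pi / 2))
    (hangle : Real.arccos |⟪u, s⟫| < ξ₀) :
    ∃ R : E →ₗ[ℝ] E,
      (∀ v ∈ V, R v ∈ V) ∧
      (∀ w ∈ Vᗮ, R w = w) ∧
      (∀ x : E, ‖R x‖ = ‖x‖) ∧
      (∃ ξ : ℝ, |ξ| ≤ ξ₀ ∧ ∀ v ∈ V, ⟪R v, v⟫ = Real.cos ξ * ‖v‖ ^ 2) ∧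
      (∃ c : ℝ, c ≠ 0 ∧ R u = c • s) ∧
      ‖LinearMap.toContinuousLinearMap R - ContinuousLinearMap.id ℝ E‖ ≤
        2 * Real.sin (ξ₀ / 2) := by
  obtain ⟨hξ₀pos, hξ₀lt⟩ := hξ₀
  have hπ := Real.pi_pos
  have hsin0 : 0 ≤ Real.sin (ξ₀ / 2) :=
    Real.sin_nonneg_of_nonneg_of_le_pi (by linarith) (by linarith)
  set a0 : ℝ := |⟪u, s⟫| with ha0
  have ha0nn : 0 ≤ a0 := abs_nonneg _
  have ha0le : a0 ≤ 1 := by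
    have h := abs_real_inner_le_norm u s
    rw [hu1, hs1] at h; simpa using h
  have hxi : Real.arccos a0 < ξ₀ := hangle
  have hcos : Real.cos (Real.arccos a0) = a0 := Real.cos_arccos (by linarith) ha0le
  have ha0ge : Real.cos ξ₀ < a0 := by
    have h := Real.cos_lt_cos_of_nonneg_of_le_pi (Real.arccos_nonneg a0) (by linarith) hxi
    rwa [hcos] at h
  set σ : ℝ := if 0 ≤ ⟪u, s⟫ then 1 else -1 with hσ
  have hσne : σ ≠ 0 := by rw [hσ]; split <;> norm_num
  set s' : E := σ • s with hs'
  have hs'V : s' ∈ V := V.smul_mem σ hs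
  have huu : ⟪u, u⟫ = 1 := by rw [real_inner_self_eq_norm_sq, hu1]; norm_num
  have hus' : ⟪u, s'⟫ = a0 := by
    rw [hs', real_inner_smul_right, ha0, hσ]
    rcases le_or_gt 0 ⟪u, s⟫ with h | h
    · rw [if_pos h, abs_of_nonneg h]; ring
    · rw [if_neg (not_le.mpr h), abs_of_neg h]; ring
  have hs'1 : ‖s'‖ = 1 := by
    have hσn : ‖σ‖ = 1 := by rw [hσ]; split <;> simp
    rw [hs', norm_smul, hσn, hs1, mul_one]
  have hss' : ⟪s', s'⟫ = 1 := by rw [real_inner_self_eq_norm_sq, hs'1]; norm_num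
  set w : E := s' - a0 • u with hwdef
  have hww : ⟪w, w⟫ = 1 - a0 ^ 2 := by
    rw [hwdef]
    have hsu : ⟪s', u⟫ = a0 := by rw [← hus']; exact real_inner_comm u s'
    simp only [inner_sub_left, inner_sub_right, real_inner_smul_left, real_inner_smul_right,
      huu, hus', hss', hsu]
    ring
  by_cases hw : w = (0 : E)
  · -- degenerate case : s' = u, take R = id
    have ha01 : a0 = 1 := by
      rw [hw] at hww; simp only [inner_zero_left] at hww
      exact stmt_17_aux_a01 ha0nn hww
    have hs'u : s' = u := by
      have : s' - a0 • u = 0 := hw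
      rw [ha01, one_smul, sub_eq_zero] at this; exact this
    refine ⟨LinearMap.id, fun v hv => hv, fun x _ => rfl, fun x => rfl,
      ⟨0, by simp; linarith, fun v _ => by
        simp [real_inner_self_eq_norm_sq]⟩,
      ⟨σ, hσne, by rw [LinearMap.id_apply, ← hs'u, hs']⟩, ?_⟩
    have hid : LinearMap.toContinuousLinearMap (LinearMap.id : E →ₗ[ℝ] E)
        = ContinuousLinearMap.id ℝ E := by ext x; simp
    rw [hid, sub_self, norm_zero]
    linarith
  · -- main case
    set snξ : ℝ := ‖w‖ with hsnd
    have hsn : snξ ^ 2 = 1 - a0 ^ 2 := by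
      rw [hsnd, ← real_inner_self_eq_norm_sq, hww]
    have hsnpos : 0 < snξ := by rw [hsnd]; exact norm_pos_iff.mpr hw
    set e2 : E := ‖w‖⁻¹ • w with he2def
    have he21 : ‖e2‖ = 1 := norm_smul_inv_norm hw
    have hwV : w ∈ V := by rw [hwdef]; exact V.sub_mem hs'V (V.smul_mem _ hu)
    have he2V : e2 ∈ V := V.smul_mem _ hwV
    have huw : ⟪u, w⟫ = 0 := by
      rw [hwdef]
      simp only [inner_sub_right, real_inner_smul_right, huu, hus']
      ring
    have hue : ⟪u, e2⟫ = 0 := by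
      rw [he2def, real_inner_smul_right, huw, mul_zero]
    have heu : ⟪e2, u⟫ = 0 := by rw [real_inner_comm, hue]
    have hee : ⟪e2, e2⟫ = 1 := by rw [real_inner_self_eq_norm_sq, he21]; norm_num
    have hwe : snξ • e2 = w := by
      rw [he2def, hsnd, smul_smul, mul_inv_cancel₀ (norm_ne_zero_iff.mpr hw), one_smul]
    set R : E →ₗ[ℝ] E :=
      { toFun := fun x => x + ((a0 - 1) * ⟪u, x⟫ - snξ * ⟪e2, x⟫) • u
          + (snξ * ⟪u, x⟫ + (a0 - 1) * ⟪e2, x⟫) • e2,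
        map_add' := by
          intro x y
          simp only [inner_add_right]
          module,
        map_smul' := by
          intro c x
          simp only [real_inner_smul_right, RingHom.id_apply]
          module } with hRdef
    have hRapp : ∀ x : E, R x = x + ((a0 - 1) * ⟪u, x⟫ - snξ * ⟪e2, x⟫) • u
        + (snξ * ⟪u, x⟫ + (a0 - 1) * ⟪e2, x⟫) • e2 := fun x => rfl
    -- orthonormality / span
    have horth : Orthonormal ℝ (![u, e2]) := by
      rw [orthonormal_iff_ite]
      intro i j
      fin_cases i <;> fin_cases j <;>
        simp [huu, hue, heu, hee, hu1, he21]
    have hrange : Set.range ![u, e2] = {u, e2} := by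
      ext x; simp [Fin.exists_fin_two, or_comm]
    have hspan : Submodule.span ℝ ({u, e2} : Set E) = V := by
      have hle : Submodule.span ℝ ({u, e2} : Set E) ≤ V := by
        rw [Submodule.span_le]
        rintro x (rfl | rfl)
        · exact hu
        · exact he2V
      refine Submodule.eq_of_le_of_finrank_le hle ?_
      rw [hV, ← hrange, finrank_span_eq_card horth.linearIndependent]
      simp
    refine ⟨R, ?_, ?_, ?_, ?_, ?_, ?_⟩
    · intro v hv
      rw [hRapp]
      exact V.add_mem (V.add_mem hv (V.smul_mem _ hu)) (V.smul_mem _ he2V)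
    · intro x hx
      have h1 : ⟪u, x⟫ = 0 := (Submodule.mem_orthogonal V x).mp hx u hu
      have h2 : ⟪e2, x⟫ = 0 := (Submodule.mem_orthogonal V x).mp hx e2 he2V
      rw [hRapp, h1, h2]
      simp
    · intro x
      have hxu : ⟪x, u⟫ = ⟪u, x⟫ := real_inner_comm u x
      have hxe : ⟪x, e2⟫ = ⟪e2, x⟫ := real_inner_comm e2 x
      have hinner : ⟪R x, R x⟫ = ⟪x, x⟫ := by
        rw [hRapp]
        simp only [inner_add_left, inner_add_right, real_inner_smul_left,
          real_inner_smul_right, huu, hue, heu, hee, hxu, hxe]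
        linear_combination (⟪u, x⟫ ^ 2 + ⟪e2, x⟫ ^ 2) * hsn
      rw [← Real.sqrt_sq (norm_nonneg (R x)), ← Real.sqrt_sq (norm_nonneg x),
        ← real_inner_self_eq_norm_sq, ← real_inner_self_eq_norm_sq, hinner]
    · refine ⟨Real.arccos a0, ?_, ?_⟩
      · rw [abs_of_nonneg (Real.arccos_nonneg a0)]; exact hxi.le
      · intro v hv
        rw [← hspan] at hv
        obtain ⟨a, b, hab⟩ := Submodule.mem_span_pair.mp hv
        rw [hcos, ← real_inner_self_eq_norm_sq, ← hab, hRapp]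
        simp only [inner_add_left, inner_add_right, inner_sub_left, inner_sub_right,
          real_inner_smul_left, real_inner_smul_right, huu, hue, heu, hee]
        ring
    · refine ⟨σ, hσne, ?_⟩
      rw [hRapp, huu, heu]
      have h1 : ((a0 - 1) * 1 - snξ * 0) • u = (a0 - 1) • u := by norm_num
      have h2 : (snξ * 1 + (a0 - 1) * 0) • e2 = snξ • e2 := by norm_num
      rw [h1, h2, hwe, hwdef, hs']
      module
    · refine ContinuousLinearMap.opNorm_le_bound _ (by linarith) ?_
      intro x
      have hTx : (LinearMap.toContinuousLinearMap R - ContinuousLinearMap.id ℝ E) x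
          = R x - x := by
        simp [ContinuousLinearMap.sub_apply]
      rw [hTx]
      have hxu : ⟪x, u⟫ = ⟪u, x⟫ := real_inner_comm u x
      have hxe : ⟪x, e2⟫ = ⟪e2, x⟫ := real_inner_comm e2 x
      have hdiff : R x - x = ((a0 - 1) * ⟪u, x⟫ - snξ * ⟪e2, x⟫) • u
          + (snξ * ⟪u, x⟫ + (a0 - 1) * ⟪e2, x⟫) • e2 := by
        rw [hRapp]; abel
      have h1 : ‖R x - x‖ ^ 2 = (2 - 2 * a0) * (⟪u, x⟫ ^ 2 + ⟪e2, x⟫ ^ 2) := by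
        rw [← real_inner_self_eq_norm_sq, hdiff]
        simp only [inner_add_left, inner_add_right,
          real_inner_smul_left, real_inner_smul_right, huu, hue, heu, hee]
        linear_combination (⟪u, x⟫ ^ 2 + ⟪e2, x⟫ ^ 2) * hsn
      have h2 : ⟪u, x⟫ ^ 2 + ⟪e2, x⟫ ^ 2 ≤ ‖x‖ ^ 2 :=
        stmt_17_aux_bessel u e2 x huu hue hee
      have h5 : Real.cos ξ₀ = 2 * Real.cos (ξ₀ / 2) ^ 2 - 1 := by
        have h := Real.cos_two_mul (ξ₀ / 2)
        rwa [show 2 * (ξ₀ / 2) = ξ₀ by ring] at h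
      have h6 := Real.sin_sq_add_cos_sq (ξ₀ / 2)
      have key : ‖R x - x‖ ^ 2 ≤ (2 * Real.sin (ξ₀ / 2) * ‖x‖) ^ 2 :=
        stmt_17_aux_ineq h1 h2 ha0ge ha0le h5 h6
          (by positivity)
      exact le_of_pow_le_pow_left₀ two_ne_zero
        (mul_nonneg (by linarith) (norm_nonneg x)) key
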